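/- For m ≥ 1 and n ≥ 1, Σ_{T} Π_{v∈I(T)} (m + 1/h_v) = (m+1)^n (mn+1)^{n−1} / n!, where the sum is over all complete (m+1)-ary trees T with n internal vertices. -/

import Mathlib

open Polynomial

inductive PlaneTree : Type where
  | node : List PlaneTree → PlaneTree

namespace PlaneTree

/-- total number of vertices -/
def numVertices : PlaneTree → ℕ
  | node ts => 1 + (ts.attach.map (fun t => numVertices t.1)).sum
decreasing_by simp only [PlaneTree.node.sizeOf_spec]; exact Nat.lt_add_left 1 (List.sizeOf_lt_of_mem t.2)

/-- number of internal vertices (vertices with at least one child) -/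
def numInternal : PlaneTree → ℕ
  | node ts => (if ts.isEmpty then 0 else 1) + (ts.attach.map (fun t => numInternal t.1)).sum
decreasing_by simp only [PlaneTree.node.sizeOf_spec]; exact Nat.lt_add_left 1 (List.sizeOf_lt_of_mem t.2)

/-- product of `g h_v` over all internal vertices `v`, where `h_v` is the number of
internal vertices of the subtree rooted at `v` -/
def internalHookProd {α : Type} [CommMonoid α] (g : ℕ → α) : PlaneTree → α
  | node ts =>
    (if ts.isEmpty then 1 else g (numInternal (node ts))) *
      (ts.attach.map (fun t => internalHookProd g t.1)).prod
decreasing_by simp only [PlaneTree.node.sizeOf_spec]; exact Nat.lt_add_left 1 (List.sizeOf_lt_of_mem t.2)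

/-- product of `g h_v` over all vertices `v`, where `h_v` is the number of
vertices of the subtree rooted at `v` -/
def vertexHookProd {α : Type} [CommMonoid α] (g : ℕ → α) : PlaneTree → α
  | node ts =>
    g (numVertices (node ts)) * (ts.attach.map (fun t => vertexHookProd g t.1)).prod
decreasing_by simp only [PlaneTree.node.sizeOf_spec]; exact Nat.lt_add_left 1 (List.sizeOf_lt_of_mem t.2)

/-- every internal vertex has exactly `a` children -/
def IsFullAry (a : ℕ) : PlaneTree → Prop
  | node ts => (ts.length = 0 ∨ ts.length = a) ∧ ∀ t ∈ ts, IsFullAry a t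

/-- `IsKMAry k m b T`: with the root of `T` viewed as being on a level of parity `b`
(`b = false` meaning even), every vertex on an even level has `k` children and
every vertex on an odd level has `m` or `0` children. -/
def IsKMAry (k m : ℕ) : Bool → PlaneTree → Prop
  | b, node ts =>
    (if b then ts.length = m ∨ ts.length = 0 else ts.length = k) ∧
      ∀ t ∈ ts, IsKMAry k m (!b) t

/-- number of vertices on levels of parity `b`, the root having parity `cur` -/
def parityVertices (b cur : Bool) : PlaneTree → ℕ
  | node ts =>
    (if cur = b then 1 else 0) + (ts.attach.map (fun t => parityVertices b (!cur) t.1)).sum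
termination_by T => sizeOf T
decreasing_by simp only [PlaneTree.node.sizeOf_spec]; exact Nat.lt_add_left 1 (List.sizeOf_lt_of_mem t.2)

/-- number of internal vertices on levels of parity `b`, the root having parity `cur` -/
def parityInternal (b cur : Bool) : PlaneTree → ℕ
  | node ts =>
    (if cur = b ∧ ¬ts.isEmpty then 1 else 0) +
      (ts.attach.map (fun t => parityInternal b (!cur) t.1)).sum
termination_by T => sizeOf T
decreasing_by simp only [PlaneTree.node.sizeOf_spec]; exact Nat.lt_add_left 1 (List.sizeOf_lt_of_mem t.2)

/-- the order of a `(k,m)`-ary tree: the number of internal (crucial) vertices on odd levels -/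
def kmOrder (T : PlaneTree) : ℕ := parityInternal true false T

end PlaneTree


namespace HookAux

open Finset

/-! ### Part 1: arithmetic identities (Abel-type) -/

lemma findiff : ∀ (n : ℕ) (p : ℚ[X]), p.natDegree < n →
    ∑ k ∈ range (n + 1), (-1 : ℚ) ^ k * (n.choose k) * p.eval (k : ℚ) = 0 := by
  intro n
  induction n with
  | zero => exact fun p hp => absurd hp (Nat.not_lt_zero _)
  | succ n ih =>
    intro p hp
    by_cases h0 : p.natDegree = 0
    · obtain ⟨c, rfl⟩ : ∃ c, p = C c := ⟨p.coeff 0, eq_C_of_natDegree_eq_zero h0⟩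
      have h1 : ∑ k ∈ range (n + 2), (-1 : ℚ) ^ k * ((n+1).choose k) = 0 := by
        exact_mod_cast Int.alternating_sum_range_choose_of_ne (Nat.succ_ne_zero n)
      calc ∑ k ∈ range (n + 2), (-1:ℚ)^k * ((n+1).choose k) * (C c).eval (k:ℚ)
          = (∑ k ∈ range (n + 2), (-1:ℚ)^k * ((n+1).choose k)) * c := by
            rw [Finset.sum_mul]; exact Finset.sum_congr rfl fun k _ => by simp
        _ = 0 := by rw [h1, zero_mul]
    · have hp1 : 1 ≤ p.natDegree := Nat.one_le_iff_ne_zero.mpr h0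
      have hpn : p.natDegree ≤ n := by omega
      have hn1 : 1 ≤ n := le_trans hp1 hpn
      have hpne : p ≠ 0 := fun h => h0 (by simp [h])
      set q : ℚ[X] := p.comp (X + C 1) - p with hqdef
      have hcompdeg : (p.comp (X + C 1)).natDegree = p.natDegree := by
        rw [natDegree_comp, natDegree_X_add_C, mul_one]
      have hcompne : p.comp (X + C 1) ≠ 0 := by
        intro h; rw [h, natDegree_zero] at hcompdeg; omega
      have hdlt : q.degree < p.degree := by
        rw [hqdef, degree_eq_natDegree hpne, ← hcompdeg, ← degree_eq_natDegree hcompne]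
        exact degree_sub_lt (p := p.comp (X + C 1)) (q := p)
          (by rw [degree_eq_natDegree hcompne, degree_eq_natDegree hpne, hcompdeg])
          hcompne
          (by rw [leadingCoeff_comp (by rw [natDegree_X_add_C]; exact one_ne_zero),
                leadingCoeff_X_add_C, one_pow, mul_one])
      have hdeg : q.natDegree < n := by
        by_cases hq0 : q = 0
        · rw [hq0, natDegree_zero]; omega
        · exact lt_of_lt_of_le (natDegree_lt_natDegree hq0 hdlt) hpn
      have hqe : ∀ k : ℕ, q.eval (k:ℚ) = p.eval ((k:ℚ)+1) - p.eval (k:ℚ) := by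
        intro k; simp [hqdef, eval_comp]
      set g : ℕ → ℚ := fun k => (-1:ℚ)^k * (n.choose k) * p.eval (k:ℚ) with hg
      have hsplit : ∀ k : ℕ, (-1:ℚ)^(k+1) * (((n+1).choose (k+1) : ℕ) : ℚ) * p.eval ((k:ℚ)+1)
          = -((-1:ℚ)^k * (n.choose k) * p.eval ((k:ℚ)+1))
            - (-1:ℚ)^k * (n.choose (k+1)) * p.eval ((k:ℚ)+1) := by
        intro k
        have hc : (((n+1).choose (k+1) : ℕ) : ℚ) = (n.choose k : ℚ) + (n.choose (k+1) : ℚ) := by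
          rw [Nat.choose_succ_succ]; push_cast; ring
        rw [hc, pow_succ]; ring
      have hB : ∑ k ∈ range (n+1), (-1:ℚ)^k * (n.choose (k+1)) * p.eval ((k:ℚ)+1)
          = p.eval 0 - ∑ k ∈ range (n+1), g k := by
        have h2 : ∑ k ∈ range (n+2), g k = ∑ k ∈ range (n+1), g (k+1) + g 0 :=
          Finset.sum_range_succ' g (n+1)
        have h3 : ∑ k ∈ range (n+2), g k = ∑ k ∈ range (n+1), g k + g (n+1) :=
          Finset.sum_range_succ g (n+1)
        have h4 : g (n+1) = 0 := by simp [hg, Nat.choose_succ_self]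
        have h5 : ∑ k ∈ range (n+1), g (k+1)
            = -∑ k ∈ range (n+1), (-1:ℚ)^k * (n.choose (k+1)) * p.eval ((k:ℚ)+1) := by
          rw [← Finset.sum_neg_distrib]
          refine Finset.sum_congr rfl fun k _ => ?_
          simp only [hg, pow_succ]; push_cast; ring
        have h6 : g 0 = p.eval 0 := by simp [hg]
        have := h2.symm.trans h3
        rw [h5, h6, h4] at this
        linarith
      calc ∑ k ∈ range (n+2), (-1:ℚ)^k * ((n+1).choose k) * p.eval (k:ℚ)
          = ∑ k ∈ range (n+1), (-1:ℚ)^(k+1) * (((n+1).choose (k+1) : ℕ) : ℚ) * p.eval ((k:ℚ)+1)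
              + p.eval 0 := by
            rw [Finset.sum_range_succ' (fun k => (-1:ℚ)^k * ((n+1).choose k) * p.eval (k:ℚ)) (n+1)]
            simp [Nat.cast_add, Nat.cast_one]
        _ = (∑ k ∈ range (n+1), -((-1:ℚ)^k * (n.choose k) * p.eval ((k:ℚ)+1)))
              - (∑ k ∈ range (n+1), (-1:ℚ)^k * (n.choose (k+1)) * p.eval ((k:ℚ)+1)) + p.eval 0 := by
            rw [← Finset.sum_sub_distrib]
            congr 1
            exact Finset.sum_congr rfl fun k _ => hsplit k
        _ = (∑ k ∈ range (n+1), -((-1:ℚ)^k * (n.choose k) * p.eval ((k:ℚ)+1)))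
              + (∑ k ∈ range (n+1), g k) := by rw [hB]; ring
        _ = - ∑ k ∈ range (n+1), (-1:ℚ)^k * (n.choose k) * q.eval (k:ℚ) := by
            rw [← Finset.sum_add_distrib, ← Finset.sum_neg_distrib]
            refine Finset.sum_congr rfl fun k _ => ?_
            rw [hqe k]; simp only [hg]; ring
        _ = 0 := by rw [ih q hdeg, neg_zero]

lemma abelFpoly (m : ℕ) : ∀ (n : ℕ) (x : ℚ), 0 < x →
    (∑ k ∈ range (n+1), C ((n.choose k : ℚ) * x * (x + m*k)^((k:ℤ)-1))
        * (X + C ((m*(n-k) : ℕ) : ℚ))^(n-k))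
      = (X + C (x + m*n)) ^ n := by
  intro n
  induction n with
  | zero =>
    intro x hx
    simp [zpow_neg_one]
    rw [← C_mul, mul_inv_cancel₀ hx.ne', map_one]
  | succ n ih =>
    intro x hx
    have hxk : ∀ k : ℕ, (0:ℚ) < x + m*k := by
      intro k; positivity
    set L : ℚ[X] := ∑ k ∈ range (n+2), C (((n+1).choose k : ℚ) * x * (x + m*k)^((k:ℤ)-1))
        * (X + C ((m*(n+1-k) : ℕ) : ℚ))^(n+1-k) with hL
    set R : ℚ[X] := (X + C (x + (m:ℚ)*((n+1 : ℕ) : ℚ))) ^ (n+1) with hR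
    have ihc : ∑ k ∈ range (n+1), C ((n.choose k : ℚ) * x * (x + m*k)^((k:ℤ)-1))
        * (X + C ((m:ℚ) + ((m*(n-k) : ℕ) : ℚ)))^(n-k) = (X + C ((m:ℚ) + (x + m*n)))^n := by
      have h := congrArg (fun p : ℚ[X] => p.comp (X + C (m:ℚ))) (ih x hx)
      simpa [add_comm, add_assoc, add_left_comm] using h
    have hder : derivative L = derivative R := by
      have hlder : derivative L = ∑ k ∈ range (n+2),
          C (((n+1).choose k : ℚ) * x * (x + m*k)^((k:ℤ)-1))
            * (C ((n+1-k : ℕ) : ℚ) * (X + C ((m*(n+1-k) : ℕ) : ℚ))^(n+1-k-1)) := by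
        rw [hL, derivative_sum]
        refine Finset.sum_congr rfl fun k _ => ?_
        rw [derivative_C_mul, derivative_pow, derivative_add, derivative_X, derivative_C,
          add_zero, mul_one]
      have hstep : derivative L = C ((n+1 : ℚ))
          * ∑ k ∈ range (n+1), C ((n.choose k : ℚ) * x * (x + m*k)^((k:ℤ)-1))
              * (X + C ((m:ℚ) + ((m*(n-k) : ℕ) : ℚ)))^(n-k) := by
        rw [hlder, Finset.sum_range_succ]
        simp only [Nat.sub_self, Nat.cast_zero, map_zero, zero_mul, mul_zero, add_zero]
        rw [Finset.mul_sum]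
        refine Finset.sum_congr rfl fun k hk => ?_
        have hk' : k ≤ n := by simpa [Nat.lt_succ_iff] using hk
        have hchoose : ((n+1).choose k : ℚ) * ((n+1-k : ℕ) : ℚ) = ((n+1 : ℚ)) * (n.choose k) := by
          have : (n+1).choose k * (n+1-k) = (n+1) * n.choose k := by
            rw [← Nat.choose_succ_right_eq, ← Nat.add_one_mul_choose_eq]
          exact_mod_cast this
        have hbase : ((m*(n+1-k) : ℕ) : ℚ) = (m:ℚ) + ((m*(n-k) : ℕ) : ℚ) := by
          have : m*(n+1-k) = m + m*(n-k) := by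
            have : n+1-k = (n-k)+1 := by omega
            rw [this]; ring
          rw [this]; push_cast; ring
        have hexp : n+1-k-1 = n-k := by omega
        rw [hexp, hbase, ← mul_assoc, ← C_mul, ← mul_assoc, ← C_mul]
        congr 2
        linear_combination (x * (x + (m:ℚ)*(k:ℚ))^((k:ℤ)-1)) * hchoose
      rw [hstep, ihc, hR, derivative_pow, derivative_add, derivative_X, derivative_C, add_zero,
        mul_one]
      congr 2
      · push_cast; ring
      · push_cast; ring
    have hconst : L - R = C ((L - R).coeff 0) :=
      eq_C_of_natDegree_eq_zero (natDegree_eq_zero_of_derivative_eq_zero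
        (by rw [derivative_sub, hder, sub_self]))
    set y0 : ℚ := -(x + (m:ℚ)*((n+1 : ℕ) : ℚ)) with hy0
    have hR0 : R.eval y0 = 0 := by
      rw [hR]; simp [hy0]
    have hL0 : L.eval y0 = 0 := by
      set p : ℚ[X] := (C x + C (m:ℚ) * X)^n with hp
      have hpdeg : p.natDegree < n+1 := by
        have h1 : (C x + C (m:ℚ) * X).natDegree ≤ 1 := by
          refine le_trans (natDegree_add_le _ _) ?_
          simp only [natDegree_C, max_le_iff]
          exact ⟨Nat.zero_le _, le_trans (natDegree_C_mul_le _ _) natDegree_X_le⟩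
        calc p.natDegree ≤ n * (C x + C (m:ℚ) * X).natDegree := natDegree_pow_le
          _ ≤ n * 1 := Nat.mul_le_mul_left n h1
          _ < n + 1 := by omega
      have hpev : ∀ k : ℕ, p.eval (k:ℚ) = (x + m*k)^n := by
        intro k; rw [hp]; simp
      have hterm : ∀ k ∈ range (n+2), (((n+1).choose k : ℚ) * x * (x + m*k)^((k:ℤ)-1))
          * (y0 + ((m*(n+1-k) : ℕ) : ℚ))^(n+1-k)
          = (x * (-1:ℚ)^(n+1)) * ((-1:ℚ)^k * ((n+1).choose k : ℚ) * p.eval (k:ℚ)) := by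
        intro k hk
        have hk' : k ≤ n+1 := by simpa [Nat.lt_succ_iff] using hk
        have hcast : ((m*(n+1-k) : ℕ) : ℚ) = (m:ℚ)*((n+1 : ℕ) : ℚ) - m*k := by
          push_cast [Nat.cast_sub hk']
          ring
        have hbase : y0 + ((m*(n+1-k) : ℕ) : ℚ) = -(x + m*k) := by
          rw [hcast, hy0]; push_cast; ring
        rw [hbase, neg_pow]
        have hzp : (x + m*k)^((k:ℤ)-1) * (x + m*k)^(n+1-k)
            = (x + m*k)^n := by
          rw [← zpow_natCast (x + m*k) (n+1-k), ← zpow_add₀ (hxk k).ne']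
          rw [show ((k:ℤ)-1) + ((n+1-k : ℕ) : ℤ) = (n : ℤ) by
            have : ((n+1-k : ℕ) : ℤ) = (n:ℤ)+1-k := by
              rw [Nat.cast_sub hk']; push_cast; ring
            rw [this]; ring]
          exact zpow_natCast _ n
        have hsign : (-1:ℚ)^(n+1-k) = (-1:ℚ)^(n+1) * (-1:ℚ)^k := by
          have h2 : (n+1-k) + 2*k = n+1+k := by omega
          have := congrArg (fun t => (-1:ℚ)^t) h2
          simp only [pow_add, pow_mul] at this
          simp only [neg_one_sq, one_pow, mul_one] at this
          rw [this, pow_add]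
        rw [hpev k]
        calc ((n+1).choose k : ℚ) * x * (x + m*k)^((k:ℤ)-1)
              * ((-1:ℚ)^(n+1-k) * (x + m*k)^(n+1-k))
            = (-1:ℚ)^(n+1-k) * (((n+1).choose k : ℚ) * x)
                * ((x + m*k)^((k:ℤ)-1) * (x + m*k)^(n+1-k)) := by ring
          _ = (-1:ℚ)^(n+1-k) * (((n+1).choose k : ℚ) * x) * (x + m*k)^n := by rw [hzp]
          _ = (x * (-1:ℚ)^(n+1)) * ((-1:ℚ)^k * ((n+1).choose k : ℚ) * (x + m*k)^n) := by
              rw [hsign]; ring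
      have : L.eval y0 = ∑ k ∈ range (n+2), (((n+1).choose k : ℚ) * x * (x + m*k)^((k:ℤ)-1))
          * (y0 + ((m*(n+1-k) : ℕ) : ℚ))^(n+1-k) := by
        rw [hL]; simp [eval_finset_sum]
      rw [this, Finset.sum_congr rfl hterm, ← Finset.mul_sum, findiff (n+1) p hpdeg, mul_zero]
    have h0 : (L - R).coeff 0 = 0 := by
      have := congrArg (eval y0) hconst
      rw [eval_sub, hL0, hR0, sub_zero, eval_C] at this
      exact this.symm
    have : L - R = 0 := by rw [hconst, h0, map_zero]
    exact sub_eq_zero.mp this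

lemma abelF (m n : ℕ) (x : ℚ) (hx : 0 < x) (y : ℚ) :
    ∑ k ∈ range (n+1), (n.choose k : ℚ) * x * (x + m*k)^((k:ℤ)-1)
        * (y + ((m*(n-k) : ℕ) : ℚ))^(n-k)
      = (x + y + m*n)^n := by
  have h := congrArg (eval y) (abelFpoly m n x hx)
  simp only [eval_finset_sum, eval_mul, eval_pow, eval_add, eval_C, eval_X] at h
  rw [show y + (x + (m:ℚ)*n) = x + y + m*n by ring] at h
  exact h

lemma abelG (m n : ℕ) (x y : ℚ) (hx : 0 < x) (hy : 0 < y) :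
    ∑ k ∈ range (n+1), (n.choose k : ℚ) * x * (x + m*k)^((k:ℤ)-1)
        * (y * (y + ((m*(n-k) : ℕ) : ℚ))^(((n-k : ℕ) : ℤ)-1))
      = (x + y) * (x + y + m*n)^((n:ℤ)-1) := by
  have hxy : (0:ℚ) < x + y := by positivity
  cases n with
  | zero =>
    rw [Finset.sum_range_one]
    norm_num [zpow_neg_one]
    field_simp
  | succ n =>
    have hF := abelF m (n+1) x hx y
    have hF' := abelF m n x hx (y + m)
    have hyc : ∀ c : ℚ, 0 ≤ c → (0:ℚ) < y + c := fun c hc => by positivity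
    have hj : ∀ (c : ℚ), 0 ≤ c → ∀ j : ℕ,
        (y + c)^j = (y + c)^((j:ℤ)-1) * (y + c) := by
      intro c hc j
      rw [← zpow_natCast (y+c) j, show (j:ℤ) = (j:ℤ)-1+1 by ring,
        zpow_add₀ (hyc c hc).ne', zpow_one]
      rw [show ((j:ℤ)-1+1)-1 = (j:ℤ)-1 by ring]
    have hsplit : ∀ k ∈ range (n+2),
        (n+1).choose k * x * (x + (m:ℚ)*k)^((k:ℤ)-1) * (y + ((m*(n+1-k) : ℕ) : ℚ))^(n+1-k)
          = (n+1).choose k * x * (x + (m:ℚ)*k)^((k:ℤ)-1)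
              * (y * (y + ((m*(n+1-k) : ℕ) : ℚ))^(((n+1-k : ℕ) : ℤ)-1))
            + (n+1).choose k * x * (x + (m:ℚ)*k)^((k:ℤ)-1)
              * (((m*(n+1-k) : ℕ) : ℚ) * (y + ((m*(n+1-k) : ℕ) : ℚ))^(((n+1-k : ℕ) : ℤ)-1)) := by
      intro k _
      rw [hj (((m*(n+1-k) : ℕ) : ℚ)) (by positivity) (n+1-k)]
      ring
    have hextra : ∑ k ∈ range (n+2), (n+1).choose k * x * (x + (m:ℚ)*k)^((k:ℤ)-1)
          * (((m*(n+1-k) : ℕ) : ℚ) * (y + ((m*(n+1-k) : ℕ) : ℚ))^(((n+1-k : ℕ) : ℤ)-1))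
        = (m:ℚ) * (n+1) * (x + (y + m) + m*n)^n := by
      rw [Finset.sum_range_succ]
      rw [show m*(n+1-(n+1)) = 0 by simp]
      simp only [Nat.cast_zero, zero_mul, mul_zero, add_zero]
      rw [← hF', Finset.mul_sum]
      refine Finset.sum_congr rfl fun k hk => ?_
      have hk' : k ≤ n := by simpa [Nat.lt_succ_iff] using hk
      have hchoose : ((n+1).choose k : ℚ) * ((m*(n+1-k) : ℕ) : ℚ)
          = (m:ℚ) * ((n+1) * (n.choose k : ℚ)) := by
        have hnat : (n+1).choose k * (m*(n+1-k)) = m * ((n+1) * n.choose k) := by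
          rw [show (n+1).choose k * (m*(n+1-k)) = m * ((n+1).choose k * (n+1-k)) by ring,
            ← Nat.choose_succ_right_eq, ← Nat.add_one_mul_choose_eq]
        exact_mod_cast hnat
      have hexp : ((n+1-k : ℕ) : ℤ) - 1 = ((n-k : ℕ) : ℤ) := by
        omega
      have hbase : y + ((m*(n+1-k) : ℕ) : ℚ) = (y + m) + ((m*(n-k) : ℕ) : ℚ) := by
        have : m*(n+1-k) = m + m*(n-k) := by
          rw [show n+1-k = (n-k)+1 by omega]; ring
        rw [this]; push_cast; ring
      rw [hexp, hbase, zpow_natCast]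
      have := hchoose
      linear_combination (x * (x + (m:ℚ)*k)^((k:ℤ)-1) * ((y + (m:ℚ)) + ((m*(n-k) : ℕ) : ℚ))^(n-k)) * this
    have hsum := Finset.sum_congr rfl hsplit
    rw [Finset.sum_add_distrib, hextra] at hsum
    rw [hF] at hsum
    have hgoal : ∑ k ∈ range (n+2), (n+1).choose k * x * (x + (m:ℚ)*k)^((k:ℤ)-1)
          * (y * (y + ((m*(n+1-k) : ℕ) : ℚ))^(((n+1-k : ℕ) : ℤ)-1))
        = (x + y + m*((n+1 : ℕ) : ℚ))^(n+1) - (m:ℚ)*(n+1)*(x + (y+m) + m*n)^n := by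
      rw [eq_sub_iff_add_eq]; exact hsum.symm
    rw [hgoal]
    have hB : (0:ℚ) < x + y + m*((n+1 : ℕ) : ℚ) := by positivity
    have hBeq : x + (y + m) + (m:ℚ)*n = x + y + m*((n+1 : ℕ) : ℚ) := by push_cast; ring
    rw [hBeq]
    have hzp : (x + y + (m:ℚ)*((n+1 : ℕ) : ℚ))^((((n+1) : ℕ):ℤ)-1)
        = (x + y + (m:ℚ)*((n+1 : ℕ) : ℚ))^n := by
      rw [show (((n+1) : ℕ):ℤ)-1 = ((n : ℕ) : ℤ) by omega, zpow_natCast]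
    rw [hzp, pow_succ]
    push_cast
    ring

/-- the tree-sum closed form -/
noncomputable def cseq (m n : ℕ) : ℚ :=
  (m+1 : ℚ)^n * ((m*n+1 : ℕ) : ℚ)^((n:ℤ)-1) / n.factorial

/-- the forest-sum closed form -/
noncomputable def eseq (m a n : ℕ) : ℚ :=
  if a = 0 then (if n = 0 then 1 else 0)
  else (a:ℚ) * (m+1:ℚ)^n * ((m*n+a : ℕ) : ℚ)^((n:ℤ)-1) / n.factorial

lemma cseq_zero (m : ℕ) : cseq m 0 = 1 := by
  simp [cseq]

lemma eseq_one (m n : ℕ) : eseq m 1 n = cseq m n := by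
  simp [eseq, cseq]

lemma conv_term (m a k n : ℕ) (ha : a ≠ 0) (hk : k ≤ n) :
    cseq m k * eseq m a (n-k)
      = (m+1:ℚ)^n / n.factorial
        * ((n.choose k : ℚ) * 1 * ((1:ℚ) + m*k)^((k:ℤ)-1)
           * ((a:ℚ) * ((a:ℚ) + ((m*(n-k) : ℕ) : ℚ))^(((n-k : ℕ) : ℤ)-1))) := by
  rw [cseq, eseq, if_neg ha]
  have h1 : ((m*k+1 : ℕ) : ℚ) = 1 + (m:ℚ)*k := by push_cast; ring
  have h2 : ((m*(n-k)+a : ℕ) : ℚ) = (a:ℚ) + ((m*(n-k) : ℕ) : ℚ) := by push_cast; ring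
  rw [h1, h2, Nat.cast_choose ℚ hk]
  set Z1 : ℚ := ((1:ℚ) + (m:ℚ)*k)^((k:ℤ)-1) with hZ1
  set Z2 : ℚ := ((a:ℚ) + ((m*(n-k) : ℕ) : ℚ))^(((n-k : ℕ) : ℤ)-1) with hZ2
  have h3 : (m+1:ℚ)^k * (m+1:ℚ)^(n-k) = (m+1:ℚ)^n := by
    rw [← pow_add]; congr 1; omega
  have hf1 : (k.factorial : ℚ) ≠ 0 := Nat.cast_ne_zero.mpr k.factorial_ne_zero
  have hf2 : ((n-k).factorial : ℚ) ≠ 0 := Nat.cast_ne_zero.mpr (n-k).factorial_ne_zero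
  have hf3 : (n.factorial : ℚ) ≠ 0 := Nat.cast_ne_zero.mpr n.factorial_ne_zero
  field_simp
  linear_combination (Z1 * Z2) * h3

lemma conv (m a n : ℕ) :
    ∑ k ∈ range (n+1), cseq m k * eseq m a (n-k) = eseq m (a+1) n := by
  rcases Nat.eq_zero_or_pos a with rfl | ha
  · rw [show (0+1) = 1 from rfl, eseq_one]
    rw [Finset.sum_eq_single n]
    · simp [eseq, cseq]
    · intro k hk hkn
      have : n - k ≠ 0 := by simp at hk; omega
      simp [eseq, this]
    · intro h; simp at h
  · have ha' : a ≠ 0 := ha.ne'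
    have hG := abelG m n 1 a one_pos (by exact_mod_cast ha)
    calc ∑ k ∈ range (n+1), cseq m k * eseq m a (n-k)
        = ∑ k ∈ range (n+1), (m+1:ℚ)^n / n.factorial
            * ((n.choose k : ℚ) * 1 * ((1:ℚ) + m*k)^((k:ℤ)-1)
               * ((a:ℚ) * ((a:ℚ) + ((m*(n-k) : ℕ) : ℚ))^(((n-k : ℕ) : ℤ)-1))) := by
          refine Finset.sum_congr rfl fun k hk => ?_
          exact conv_term m a k n ha' (by simpa [Nat.lt_succ_iff] using hk)
      _ = (m+1:ℚ)^n / n.factorial * ((1 + (a:ℚ)) * (1 + a + m*n)^((n:ℤ)-1)) := by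
          rw [← Finset.mul_sum, hG]
      _ = eseq m (a+1) n := by
          rw [eseq, if_neg (Nat.succ_ne_zero a)]
          have hc : ((m*n+(a+1) : ℕ) : ℚ) = 1 + (a:ℚ) + (m:ℚ)*n := by push_cast; ring
          have hc2 : ((a+1 : ℕ) : ℚ) = 1 + (a:ℚ) := by push_cast; ring
          rw [hc]
          try push_cast
          try ring

lemma gstep (m n : ℕ) :
    ((m:ℚ) + 1/((n+1 : ℕ) : ℚ)) * eseq m (m+1) n = cseq m (n+1) := by
  rw [eseq, if_neg (Nat.succ_ne_zero m), cseq]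
  have hb : m*n+(m+1) = m*(n+1)+1 := by ring
  rw [hb]
  set B : ℚ := ((m*(n+1)+1 : ℕ) : ℚ) with hB
  have hBpos : (0:ℚ) < B := by rw [hB]; exact_mod_cast Nat.succ_pos _
  have hg : (m:ℚ) + 1/((n+1 : ℕ) : ℚ) = B / ((n+1 : ℕ) : ℚ) := by
    rw [hB]
    have : ((n+1 : ℕ) : ℚ) ≠ 0 := by exact_mod_cast Nat.succ_ne_zero n
    field_simp
    try push_cast
    try ring
  rw [hg]
  have hzp : B^((n:ℤ)-1) * B = B^(((n+1 : ℕ):ℤ)-1) := by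
    rw [show (((n+1 : ℕ)):ℤ)-1 = ((n:ℤ)-1)+1 by push_cast; ring,
      zpow_add₀ hBpos.ne', zpow_one]
  have hfac : ((n+1).factorial : ℚ) = ((n+1 : ℕ) : ℚ) * n.factorial := by
    rw [Nat.factorial_succ]; push_cast; ring
  rw [hfac, ← hzp]
  have h1 : ((n+1:ℕ):ℚ) ≠ 0 := by exact_mod_cast Nat.succ_ne_zero n
  have h2 : (n.factorial : ℚ) ≠ 0 := Nat.cast_ne_zero.mpr n.factorial_ne_zero
  field_simp
  try push_cast
  try ring

end HookAux

namespace HookAux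

open PlaneTree

lemma numInternal_node (ts : List PlaneTree) :
    numInternal (.node ts) = (if ts.isEmpty then 0 else 1) + (ts.map numInternal).sum := by
  rw [numInternal]
  congr 1
  exact congrArg List.sum (List.attach_map_val (l := ts) (f := numInternal))

lemma internalHookProd_node {α : Type} [CommMonoid α] (g : ℕ → α) (ts : List PlaneTree) :
    internalHookProd g (.node ts)
      = (if ts.isEmpty then 1 else g (numInternal (.node ts)))
          * (ts.map (internalHookProd g)).prod := by
  rw [internalHookProd]
  congr 1
  exact congrArg List.prod (List.attach_map_val (l := ts) (f := internalHookProd g))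

lemma isFullAry_node (A : ℕ) (ts : List PlaneTree) :
    IsFullAry A (.node ts) ↔ (ts.length = 0 ∨ ts.length = A) ∧ ∀ t ∈ ts, IsFullAry A t := by
  rw [IsFullAry]

mutual
/-- all full `A`-ary trees with `n` internal vertices (given enough fuel) -/
def treeList (A : ℕ) : ℕ → ℕ → List PlaneTree
  | 0, _ => []
  | _+1, 0 => [.node []]
  | f+1, n+1 => (forestList A f A n).map .node
  termination_by f n => (f, 0, 0)

/-- all lists of `a` full `A`-ary trees with `n` internal vertices in total -/
def forestList (A : ℕ) : ℕ → ℕ → ℕ → List (List PlaneTree)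
  | _, 0, 0 => [[]]
  | _, 0, _+1 => []
  | f, a+1, n => (List.range (n+1)).flatMap fun k =>
      (treeList A f k).flatMap fun t => (forestList A f a (n-k)).map (t :: ·)
  termination_by f a n => (f, 1, a)
end

lemma treeList_zero (A f : ℕ) : treeList A (f+1) 0 = [.node []] := by
  rw [treeList]

lemma treeList_succ (A f n : ℕ) :
    treeList A (f+1) (n+1) = (forestList A f A n).map .node := by
  rw [treeList]

lemma forestList_zero (A f : ℕ) : forestList A f 0 0 = [[]] := by
  rw [forestList]

lemma forestList_zero_succ (A f n : ℕ) : forestList A f 0 (n+1) = [] := by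
  rw [forestList]

lemma forestList_succ (A f a n : ℕ) :
    forestList A f (a+1) n = (List.range (n+1)).flatMap fun k =>
      (treeList A f k).flatMap fun t => (forestList A f a (n-k)).map (t :: ·) := by
  rw [forestList]

/-- characterization of membership -/
lemma mem_combined (A : ℕ) (hA : 1 ≤ A) : ∀ f : ℕ,
    (∀ n, n < f → ∀ T, T ∈ treeList A f n ↔ (IsFullAry A T ∧ numInternal T = n)) ∧
    (∀ a n, n < f → ∀ l, l ∈ forestList A f a n ↔
      (l.length = a ∧ (∀ t ∈ l, IsFullAry A t) ∧ (l.map numInternal).sum = n)) := by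
  intro f
  induction f with
  | zero => exact ⟨fun n hn => absurd hn (Nat.not_lt_zero n), fun a n hn => absurd hn (Nat.not_lt_zero n)⟩
  | succ f ih =>
    have treecl : ∀ n, n < f+1 → ∀ T, T ∈ treeList A (f+1) n ↔
        (IsFullAry A T ∧ numInternal T = n) := by
      intro n hn T
      match n with
      | 0 =>
        rw [treeList_zero]
        simp only [List.mem_singleton]
        constructor
        · rintro rfl
          refine ⟨(isFullAry_node A []).mpr ⟨Or.inl rfl, by simp⟩, by rw [numInternal_node]; simp⟩
        · rintro ⟨hfull, hint⟩
          obtain ⟨ts⟩ := T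
          rw [numInternal_node] at hint
          rcases ts with _ | ⟨t, ts'⟩
          · rfl
          · simp at hint
      | n+1 =>
        rw [treeList_succ]
        simp only [List.mem_map]
        constructor
        · rintro ⟨l, hl, rfl⟩
          rw [(ih.2 A n (by omega) l)] at hl
          obtain ⟨hlen, hfull, hsum⟩ := hl
          have hne : ¬ l.isEmpty := by
            rw [List.isEmpty_iff]
            intro h
            rw [h] at hlen
            simp at hlen
            omega
          refine ⟨(isFullAry_node A l).mpr ⟨Or.inr hlen, hfull⟩, ?_⟩
          rw [numInternal_node, if_neg hne, hsum]
          omega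
        · rintro ⟨hfull, hint⟩
          obtain ⟨ts⟩ := T
          rw [numInternal_node] at hint
          have hne : ¬ ts.isEmpty := by
            intro h
            rw [if_pos h] at hint
            rw [List.isEmpty_iff] at h
            rw [h] at hint
            simp at hint
          rw [if_neg hne] at hint
          rw [isFullAry_node] at hfull
          obtain ⟨hlen | hlen, hfull'⟩ := hfull
          · exact absurd (List.isEmpty_iff.mpr (List.length_eq_zero_iff.mp hlen)) hne
          · refine ⟨ts, ?_, rfl⟩
            rw [ih.2 A n (by omega) ts]
            exact ⟨hlen, hfull', by omega⟩
    refine ⟨treecl, ?_⟩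
    intro a
    induction a with
    | zero =>
      intro n hn l
      match n with
      | 0 =>
        rw [forestList_zero]
        simp only [List.mem_singleton]
        constructor
        · rintro rfl; simp
        · rintro ⟨hlen, -, -⟩
          exact List.length_eq_zero_iff.mp hlen
      | n+1 =>
        rw [forestList_zero_succ]
        simp only [List.not_mem_nil, false_iff, not_and]
        intro hlen
        rw [List.length_eq_zero_iff.mp hlen]
        simp
    | succ a iha =>
      intro n hn l
      rw [forestList_succ]
      simp only [List.mem_flatMap, List.mem_map, List.mem_range]
      constructor
      · rintro ⟨k, hk, t, ht, l', hl', rfl⟩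
        rw [treecl k (by omega) t] at ht
        rw [iha (n-k) (by omega) l'] at hl'
        obtain ⟨hlen, hfull, hsum⟩ := hl'
        refine ⟨by simp [hlen], ?_, ?_⟩
        · intro u hu
          rcases List.mem_cons.mp hu with rfl | hu
          · exact ht.1
          · exact hfull u hu
        · simp only [List.map_cons, List.sum_cons, hsum, ht.2]
          omega
      · rintro ⟨hlen, hfull, hsum⟩
        rcases l with _ | ⟨t, l'⟩
        · simp at hlen
        · simp only [List.map_cons, List.sum_cons] at hsum
          refine ⟨numInternal t, by omega, t, ?_, l', ?_, rfl⟩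
          · rw [treecl (numInternal t) (by omega) t]
            exact ⟨hfull t (List.mem_cons_self (a := t) (l := l')), rfl⟩
          · rw [iha (n - numInternal t) (by omega) l']
            refine ⟨by simpa using hlen, fun u hu => hfull u (List.mem_cons_of_mem t hu), by omega⟩

/-- no duplicates -/
lemma nodup_combined (A : ℕ) (hA : 1 ≤ A) : ∀ f : ℕ,
    (∀ n, n < f → (treeList A f n).Nodup) ∧
    (∀ a n, n < f → (forestList A f a n).Nodup) := by
  intro f
  induction f with
  | zero => exact ⟨fun n hn => absurd hn (Nat.not_lt_zero n),
      fun a n hn => absurd hn (Nat.not_lt_zero n)⟩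
  | succ f ih =>
    have mem := (mem_combined A hA (f+1)).1
    have treecl : ∀ n, n < f+1 → (treeList A (f+1) n).Nodup := by
      intro n hn
      match n with
      | 0 => rw [treeList_zero]; exact List.nodup_singleton _
      | n+1 =>
        rw [treeList_succ]
        exact List.Nodup.map (fun a b h => by injection h) (ih.2 A n (by omega))
    refine ⟨treecl, ?_⟩
    intro a
    induction a with
    | zero =>
      intro n hn
      match n with
      | 0 => rw [forestList_zero]; exact List.nodup_singleton _
      | n+1 => rw [forestList_zero_succ]; exact List.nodup_nil
    | succ a iha =>
      intro n hn
      rw [forestList_succ, List.nodup_flatMap]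
      constructor
      · intro k hk
        rw [List.mem_range] at hk
        rw [List.nodup_flatMap]
        constructor
        · intro t _
          exact List.Nodup.map (fun l1 l2 h => by injection h) (iha (n-k) (by omega))
        · refine List.Pairwise.imp ?_ (treecl k (by omega))
          intro t u htu x hxt hxu
          obtain ⟨l1, -, rfl⟩ := List.mem_map.mp hxt
          obtain ⟨l2, -, h2⟩ := List.mem_map.mp hxu
          injection h2 with h h'
          exact htu h.symm
      · refine List.Pairwise.imp_of_mem ?_ (List.pairwise_lt_range (n := n+1))
        intro k k' hk hk' hkk' x hx hx'
        rw [List.mem_range] at hk hk'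
        simp only [List.mem_flatMap] at hx hx'
        obtain ⟨t, ht, hxt⟩ := hx
        obtain ⟨u, hu, hxu⟩ := hx'
        obtain ⟨l1, -, rfl⟩ := List.mem_map.mp hxt
        obtain ⟨l2, -, h2⟩ := List.mem_map.mp hxu
        have hut : u = t := ((List.cons.injEq u l2 t l1).mp h2).1
        have h3 := ((mem k (by omega) t).mp ht).2
        have h4 := ((mem k' (by omega) u).mp hu).2
        rw [hut, h3] at h4
        omega

/-- the hook-product weight -/
noncomputable def Pfun (m : ℕ) : PlaneTree → ℚ :=
  internalHookProd (fun h => (m:ℚ) + 1/(h:ℚ))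

/-- the hook-product weight of a forest -/
noncomputable def Qfun (m : ℕ) (l : List PlaneTree) : ℚ := (l.map (Pfun m)).prod

lemma Pfun_leaf (m : ℕ) : Pfun m (.node []) = 1 := by
  rw [Pfun, internalHookProd_node]; simp

lemma Pfun_node (m : ℕ) (ts : List PlaneTree) (h : ¬ ts.isEmpty) :
    Pfun m (.node ts) = ((m:ℚ) + 1/((numInternal (.node ts) : ℕ) : ℚ)) * Qfun m ts := by
  rw [Pfun, internalHookProd_node, if_neg h]; rfl

lemma Qfun_cons (m : ℕ) (t : PlaneTree) (l : List PlaneTree) :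
    Qfun m (t :: l) = Pfun m t * Qfun m l := by
  simp [Qfun]

lemma sum_map_flatMap {α β γ : Type*} [AddCommMonoid γ] (l : List α) (F : α → List β)
    (g : β → γ) :
    ((l.flatMap F).map g).sum = (l.map fun x => ((F x).map g).sum).sum := by
  induction l with
  | nil => simp
  | cons x xs ih => simp [List.flatMap_cons, ih]

lemma list_range_sum {M : Type*} [AddCommMonoid M] (n : ℕ) (f : ℕ → M) :
    ((List.range n).map f).sum = ∑ k ∈ Finset.range n, f k := by
  induction n with
  | zero => simp
  | succ n ih =>
      rw [List.range_succ, Finset.sum_range_succ, List.map_append, List.sum_append, ih]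
      simp

/-- the weighted counts -/
lemma sum_combined (m : ℕ) : ∀ f : ℕ,
    (∀ n, n < f → ((treeList (m+1) f n).map (Pfun m)).sum = cseq m n) ∧
    (∀ a n, n < f → ((forestList (m+1) f a n).map (Qfun m)).sum = eseq m a n) := by
  intro f
  induction f with
  | zero => exact ⟨fun n hn => absurd hn (Nat.not_lt_zero n),
      fun a n hn => absurd hn (Nat.not_lt_zero n)⟩
  | succ f ih =>
    have treecl : ∀ n, n < f+1 → ((treeList (m+1) (f+1) n).map (Pfun m)).sum = cseq m n := by
      intro n hn
      match n with
      | 0 => rw [treeList_zero]; simp [Pfun_leaf, cseq_zero]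
      | n+1 =>
        rw [treeList_succ, List.map_map]
        have hmap : ∀ l ∈ forestList (m+1) f (m+1) n,
            (Pfun m ∘ PlaneTree.node) l = ((m:ℚ) + 1/((n+1 : ℕ) : ℚ)) * Qfun m l := by
          intro l hl
          obtain ⟨hlen, hfull, hsum⟩ :=
            ((mem_combined (m+1) (Nat.le_add_left 1 m) f).2 (m+1) n (by omega) l).mp hl
          have hne : ¬ l.isEmpty := by
            rw [List.isEmpty_iff]; intro h; rw [h] at hlen; simp at hlen
          have hint : numInternal (.node l) = n+1 := by
            rw [numInternal_node, if_neg hne, hsum]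
            omega
          simp only [Function.comp_apply]
          rw [Pfun_node m l hne, hint]
        rw [List.map_congr_left hmap, List.sum_map_mul_left, ih.2 (m+1) n (by omega)]
        exact gstep m n
    refine ⟨treecl, ?_⟩
    intro a
    induction a with
    | zero =>
      intro n hn
      match n with
      | 0 => rw [forestList_zero]; simp [Qfun, eseq]
      | n+1 => rw [forestList_zero_succ]; simp [eseq]
    | succ a iha =>
      intro n hn
      rw [forestList_succ, sum_map_flatMap]
      have h1 : ∀ k ∈ List.range (n+1),
          (((treeList (m+1) (f+1) k).flatMap fun t =>
              (forestList (m+1) (f+1) a (n-k)).map (t :: ·)).map (Qfun m)).sum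
            = cseq m k * eseq m a (n-k) := by
        intro k hk
        rw [List.mem_range] at hk
        rw [sum_map_flatMap]
        have h2 : ∀ t ∈ treeList (m+1) (f+1) k,
            (((forestList (m+1) (f+1) a (n-k)).map (t :: ·)).map (Qfun m)).sum
              = Pfun m t * eseq m a (n-k) := by
          intro t _
          rw [List.map_map]
          have hcomp : (Qfun m ∘ (t :: ·)) = fun l => Pfun m t * Qfun m l := by
            funext l; simp [Function.comp, Qfun_cons]
          rw [hcomp, List.sum_map_mul_left, iha (n-k) (by omega)]
        rw [List.map_congr_left h2, List.sum_map_mul_right, treecl k (by omega)]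
      rw [List.map_congr_left h1, list_range_sum]
      exact conv m a n

end HookAux
/-- `Σ_T Π_{v∈I(T)} (m + 1/h_v) = (m+1)ⁿ(mn+1)ⁿ⁻¹/n!`, summed over all complete
`(m+1)`-ary trees `T` with `n` internal vertices. -/
theorem hook_m_plus_reciprocal_sum (m n : ℕ) (hm : 1 ≤ m) (hn : 1 ≤ n) :
    (∑ᶠ T : {T : PlaneTree // PlaneTree.IsFullAry (m + 1) T ∧ PlaneTree.numInternal T = n},
        PlaneTree.internalHookProd (fun h => (m : ℚ) + 1 / (h : ℚ)) T.1)
      = ((m + 1 : ℚ) ^ n * ((m * n + 1 : ℕ) : ℚ) ^ (n - 1)) / n.factorial := by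
  classical
  have hA : 1 ≤ m + 1 := Nat.le_add_left 1 m
  have hnodup : (HookAux.treeList (m+1) (n+1) n).Nodup :=
    (HookAux.nodup_combined (m+1) hA (n+1)).1 n (Nat.lt_succ_self n)
  set S : Finset PlaneTree := ⟨(HookAux.treeList (m+1) (n+1) n : Multiset PlaneTree), hnodup⟩
    with hS
  have hmem : ∀ T : PlaneTree, (PlaneTree.IsFullAry (m+1) T ∧ PlaneTree.numInternal T = n)
      ↔ T ∈ S := by
    intro T
    rw [← (HookAux.mem_combined (m+1) hA (n+1)).1 n (Nat.lt_succ_self n) T]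
    simp [hS]
    exact Iff.rfl
  have h1 : (∑ᶠ T : {T : PlaneTree // PlaneTree.IsFullAry (m + 1) T ∧ PlaneTree.numInternal T = n},
        PlaneTree.internalHookProd (fun h => (m : ℚ) + 1 / (h : ℚ)) T.1)
      = ∑ᶠ T ∈ {T : PlaneTree | PlaneTree.IsFullAry (m + 1) T ∧ PlaneTree.numInternal T = n},
          HookAux.Pfun m T :=
    finsum_set_coe_eq_finsum_mem
      {T : PlaneTree | PlaneTree.IsFullAry (m + 1) T ∧ PlaneTree.numInternal T = n}
  have hseteq : {T : PlaneTree | PlaneTree.IsFullAry (m + 1) T ∧ PlaneTree.numInternal T = n}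
      = (↑S : Set PlaneTree) := by
    ext T
    rw [Set.mem_setOf_eq, Finset.mem_coe]
    exact hmem T
  rw [h1, hseteq, finsum_mem_coe_finset]
  have h2 : ∑ T ∈ S, HookAux.Pfun m T
      = ((HookAux.treeList (m+1) (n+1) n).map (HookAux.Pfun m)).sum := by
    rw [hS]
    rfl
  rw [h2, (HookAux.sum_combined m (n+1)).1 n (Nat.lt_succ_self n), HookAux.cseq]
  congr 1
  congr 1
  rw [show (n:ℤ) - 1 = ((n - 1 : ℕ) : ℤ) by omega, zpow_natCast]
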